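/- The numbers q_{ij} satisfy: q_{i0} = binom(2i, i) for all i ≥ 0; q_{i1} = (1/2)·binom(2i, i) for all i ≥ 1; and q_{ij} = −q_{i−1,j−2} + q_{i,j−1} for all i ≥ 1 and j ≥ 2. -/

import Mathlib

open PowerSeries Finset

/-- The generating function of the Catalan numbers. -/
noncomputable def catalanGF : PowerSeries ℝ :=
  PowerSeries.mk fun n => (catalan n : ℝ)

/-- The generating function `W(x) = ∑ binom(2n,n) xⁿ` of the central binomial coefficients. -/
noncomputable def centralBinomGF : PowerSeries ℝ :=
  PowerSeries.mk fun n => ((2 * n).choose n : ℝ)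

/-- `q i j` is the coefficient of `x^i` in `W(x)·(xC(x))^j`, i.e. the `(i,j)` entry of
`D(𝕃^S)⁻¹D`. -/
noncomputable def qEntry (i j : ℕ) : ℝ :=
  PowerSeries.coeff i (centralBinomGF * (PowerSeries.X * catalanGF) ^ j)

lemma hC : catalanGF = 1 + PowerSeries.X * catalanGF ^ 2 := by
  ext n
  cases n with
  | zero => simp [catalanGF]
  | succ n =>
    rw [map_add, coeff_one, if_neg n.succ_ne_zero, sq, coeff_succ_X_mul, coeff_mul]
    simp only [catalanGF, coeff_mk, zero_add, catalan_succ' n]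
    push_cast
    rfl

lemma hW : centralBinomGF = d⁄dX ℝ (PowerSeries.X * catalanGF) := by
  ext n
  rw [coeff_derivative, coeff_succ_X_mul]
  simp only [centralBinomGF, catalanGF, coeff_mk]
  rw [← Nat.centralBinom, ← succ_mul_catalan_eq_centralBinom]
  push_cast
  ring

lemma hKey : centralBinomGF =
    1 + 2 * (PowerSeries.X * catalanGF) * centralBinomGF := by
  have hF : PowerSeries.X * catalanGF =
      PowerSeries.X + (PowerSeries.X * catalanGF) ^ 2 := by
    conv_lhs => rw [hC]
    ring
  rw [hW]
  conv_lhs => rw [hF]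
  rw [map_add, derivative_X, sq, Derivation.leibniz]
  rw [smul_eq_mul, ← hW]
  ring


/-- Recurrence relations for the entries of `D(𝕃^S)⁻¹D`:
`qᵢ₀ = binom(2i,i)` for all `i`, `qᵢ₁ = (1/2)·binom(2i,i)` for `i ≥ 1`, and
`q_{ij} = −q_{i−1,j−2} + q_{i,j−1}` for `i ≥ 1`, `j ≥ 2`. -/
theorem stmt_5 :
    (∀ i : ℕ, qEntry i 0 = ((2 * i).choose i : ℝ)) ∧
    (∀ i : ℕ, 1 ≤ i → qEntry i 1 = (1 / 2 : ℝ) * ((2 * i).choose i : ℝ)) ∧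
    (∀ i j : ℕ, 1 ≤ i → 2 ≤ j →
      qEntry i j = -qEntry (i - 1) (j - 2) + qEntry i (j - 1)) := by
  refine ⟨fun i => ?_, fun i hi => ?_, fun i j hi hj => ?_⟩
  · simp [qEntry, centralBinomGF]
  · have h2' : PowerSeries.coeff i
        ((2 : ℝ) • (centralBinomGF * (PowerSeries.X * catalanGF) ^ 1)) =
        PowerSeries.coeff i centralBinomGF - PowerSeries.coeff i 1 := by
      rw [show ((2:ℝ) • (centralBinomGF * (PowerSeries.X * catalanGF) ^ 1)) =
        centralBinomGF - 1 from by rw [smul_eq_C_mul]; rw [pow_one]; push_cast [map_ofNat]; linear_combination -hKey]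
      rw [map_sub]
    rw [map_smul, smul_eq_mul, coeff_one, if_neg (by omega : i ≠ 0)] at h2'
    simp only [qEntry, centralBinomGF, coeff_mk] at *
    rw [pow_one] at h2' ⊢
    linarith [h2']
  · obtain ⟨m, rfl⟩ : ∃ m, i = m + 1 := ⟨i - 1, by omega⟩
    obtain ⟨k, rfl⟩ : ∃ k, j = k + 2 := ⟨j - 2, by omega⟩
    have hF2 : (PowerSeries.X * catalanGF) ^ 2 =
        PowerSeries.X * catalanGF - PowerSeries.X := by
      linear_combination (-PowerSeries.X) * hC
    have hser : centralBinomGF * (PowerSeries.X * catalanGF) ^ (k + 2) =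
        centralBinomGF * (PowerSeries.X * catalanGF) ^ (k + 1) -
          PowerSeries.X * (centralBinomGF * (PowerSeries.X * catalanGF) ^ k) := by
      linear_combination centralBinomGF * (PowerSeries.X * catalanGF) ^ k * hF2
    simp only [qEntry, Nat.add_sub_cancel, show k + 2 - 2 = k from rfl,
      show k + 2 - 1 = k + 1 from rfl, show m + 1 - 1 = m from rfl]
    rw [hser, map_sub, coeff_succ_X_mul]
    ring
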